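/- arXiv:1708.08502 — 2 statements merged into one kernel-verified Lean document; each statement's English description precedes it below -/
import Mathlib

section
/- Let G be a planar PCC graph and let σ be a face of G such that the multiset of vertices on the boundary of σ is not a set (i.e. some vertex occurs on the boundary of σ with multiplicity at least 2). Then 7 ≤ |σ| ≤ 11. The same conclusion holds if the multiset of edges on the boundary of σ is not a set. -/
/-!
We formalize finite graphs 2-cell embedded in the sphere via combinatorial maps
(rotation systems): a finite set of darts together with a vertex-rotation
permutation `σ` and a fixed-point-free edge involution `α`.  Vertices, edges
and faces are the orbits of `σ`, `α` and of the face permutation `φ = σ ∘ α`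
respectively; Euler's formula `#V - #E + #F = 2` says that the underlying
closed orientable surface is the sphere.
-/

/-- A finite combinatorial map (rotation system), encoding a finite graph
2-cell embedded in a closed orientable surface. -/
structure PlaneGraph where
  /-- the type of darts (oriented edges) -/
  D : Type
  fintypeD : Fintype D
  /-- the counterclockwise rotation of the darts around their base vertex -/
  σ : Equiv.Perm D
  /-- the involution sending a dart to the opposite dart of the same edge -/
  α : Equiv.Perm D
  α_invol : ∀ d, α (α d) = d
  α_fixfree : ∀ d, α d ≠ d

namespace PlaneGraph

variable (G : PlaneGraph)

instance : Fintype G.D := G.fintypeD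

/-- The face permutation. -/
def φ : Equiv.Perm G.D := G.σ * G.α

/-- Darts based at the same vertex, i.e. in the same `σ`-orbit. -/
def vSetoid : Setoid G.D :=
  ⟨G.σ.SameCycle, ⟨fun _ => Equiv.Perm.SameCycle.refl _ _,
    fun h => h.symm, fun h h' => h.trans h'⟩⟩

/-- Darts of the same edge, i.e. in the same `α`-orbit. -/
def eSetoid : Setoid G.D :=
  ⟨G.α.SameCycle, ⟨fun _ => Equiv.Perm.SameCycle.refl _ _,
    fun h => h.symm, fun h h' => h.trans h'⟩⟩

/-- Darts of the same face, i.e. in the same `φ`-orbit. -/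
def fSetoid : Setoid G.D :=
  ⟨G.φ.SameCycle, ⟨fun _ => Equiv.Perm.SameCycle.refl _ _,
    fun h => h.symm, fun h h' => h.trans h'⟩⟩

/-- The vertices of the graph. -/
def Vertex := Quotient G.vSetoid

/-- The edges of the graph. -/
def Edge := Quotient G.eSetoid

/-- The faces of the embedded graph. -/
def Face := Quotient G.fSetoid

noncomputable instance : Fintype G.Vertex :=
  @Quotient.fintype _ _ G.vSetoid (Classical.decRel _)

noncomputable instance : Fintype G.Edge :=
  @Quotient.fintype _ _ G.eSetoid (Classical.decRel _)

noncomputable instance : Fintype G.Face :=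
  @Quotient.fintype _ _ G.fSetoid (Classical.decRel _)

/-- The base vertex of a dart. -/
def vertexOf (d : G.D) : G.Vertex := Quotient.mk G.vSetoid d

/-- The edge underlying a dart. -/
def edgeOf (d : G.D) : G.Edge := Quotient.mk G.eSetoid d

/-- The face on the left of a dart. -/
def faceOf (d : G.D) : G.Face := Quotient.mk G.fSetoid d

open scoped Classical in
/-- The darts based at a given vertex. -/
noncomputable def dartsAt (v : G.Vertex) : Finset G.D :=
  Finset.univ.filter fun d => G.vertexOf d = v

open scoped Classical in
/-- The darts of a given face. -/
noncomputable def dartsOfFace (f : G.Face) : Finset G.D :=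
  Finset.univ.filter fun d => G.faceOf d = f

open scoped Classical in
/-- The darts of a given edge. -/
noncomputable def dartsOfEdge (e : G.Edge) : Finset G.D :=
  Finset.univ.filter fun d => G.edgeOf d = e

/-- The degree of a vertex. -/
noncomputable def degree (v : G.Vertex) : ℕ := (G.dartsAt v).card

/-- The size of a face: the number of its boundary edges, counted with
multiplicity. -/
noncomputable def faceSize (f : G.Face) : ℕ := (G.dartsOfFace f).card

/-- The multiset of faces incident to a vertex (with multiplicity). -/
noncomputable def facesAt (v : G.Vertex) : Multiset G.Face :=
  (G.dartsAt v).val.map G.faceOf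

/-- The face vector of a vertex: the multiset of the sizes of the faces
incident to it (with multiplicity). -/
noncomputable def faceVector (v : G.Vertex) : Multiset ℕ :=
  (G.dartsAt v).val.map fun d => G.faceSize (G.faceOf d)

/-- The multiset of the boundary vertices of a face (with multiplicity). -/
noncomputable def boundaryVertices (f : G.Face) : Multiset G.Vertex :=
  (G.dartsOfFace f).val.map G.vertexOf

/-- The multiset of the boundary edges of a face (with multiplicity). -/
noncomputable def boundaryEdges (f : G.Face) : Multiset G.Edge :=
  (G.dartsOfFace f).val.map G.edgeOf

/-- The side vector of an edge: the multiset of the sizes of the two faces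
lying on either side of it. -/
noncomputable def sideVector (e : G.Edge) : Multiset ℕ :=
  (G.dartsOfEdge e).val.map fun d => G.faceSize (G.faceOf d)

/-- The combinatorial curvature of a vertex:
`K(v) = 1 - deg(v)/2 + ∑_{σ ∈ F(v)} 1/|σ|`. -/
noncomputable def curvature (v : G.Vertex) : ℚ :=
  1 - (G.degree v : ℚ) / 2 + ∑ d ∈ G.dartsAt v, (1 : ℚ) / (G.faceSize (G.faceOf d))

/-- The graph is connected. -/
def Connected : Prop :=
  ∀ d d' : G.D, Relation.ReflTransGen (fun a b => G.σ a = b ∨ G.α a = b) d d'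

/-- The graph has no loops. -/
def Loopless : Prop := ∀ d : G.D, G.vertexOf (G.α d) ≠ G.vertexOf d

/-- The graph has no multiple edges: an edge is determined by its two
endpoints. -/
def NoMultiEdges : Prop :=
  ∀ d d' : G.D, G.vertexOf d = G.vertexOf d' →
    G.vertexOf (G.α d) = G.vertexOf (G.α d') → G.edgeOf d = G.edgeOf d'

/-- Euler's formula `#V - #E + #F = 2`: the graph is 2-cell embedded in the
sphere. -/
def IsSphere : Prop :=
  (Fintype.card G.Vertex : ℤ) - (Fintype.card G.Edge : ℤ) +
    (Fintype.card G.Face : ℤ) = 2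

/-- The multiset of the sizes of all faces of the graph. -/
noncomputable def allFaceSizes : Multiset ℕ :=
  (Finset.univ : Finset G.Face).val.map G.faceSize

/-- `G` is a prism of some order `N`: it has `2N` vertices, two faces of size
`N` and `N` faces of size 4, and every vertex is incident to faces of sizes
`4, 4, N`. -/
def IsPrism : Prop :=
  ∃ N : ℕ, Fintype.card G.Vertex = 2 * N ∧
    (∀ v : G.Vertex, G.faceVector v = {4, 4, N}) ∧
    G.allFaceSizes = Multiset.replicate N 4 + {N, N}

/-- `G` is an antiprism of some order `N`: it has `2N` vertices, two faces of
size `N` and `2N` faces of size 3, and every vertex is incident to faces of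
sizes `3, 3, 3, N`. -/
def IsAntiprism : Prop :=
  ∃ N : ℕ, Fintype.card G.Vertex = 2 * N ∧
    (∀ v : G.Vertex, G.faceVector v = {3, 3, 3, N}) ∧
    G.allFaceSizes = Multiset.replicate (2 * N) 3 + {N, N}

/-- A planar PCC graph: a finite simple connected planar graph, 2-cell
embedded in the sphere, which is not a prism or an antiprism, all of whose
vertices have degree at least 3 and strictly positive combinatorial
curvature. -/
def IsPCC : Prop :=
  G.Connected ∧ G.Loopless ∧ G.NoMultiEdges ∧ G.IsSphere ∧
    (∀ v : G.Vertex, 3 ≤ G.degree v) ∧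
    (∀ v : G.Vertex, 0 < G.curvature v) ∧
    ¬G.IsPrism ∧ ¬G.IsAntiprism

end PlaneGraph

namespace PlaneGraph

variable {G : PlaneGraph}

lemma phi_apply (x : G.D) : G.φ x = G.σ (G.α x) := rfl

lemma vertex_eq_iff {x y : G.D} : G.vertexOf x = G.vertexOf y ↔ G.σ.SameCycle x y :=
  ⟨fun h => Quotient.exact h, fun h => Quotient.sound h⟩

lemma face_eq_iff {x y : G.D} : G.faceOf x = G.faceOf y ↔ G.φ.SameCycle x y :=
  ⟨fun h => Quotient.exact h, fun h => Quotient.sound h⟩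

lemma edge_eq_iff {x y : G.D} : G.edgeOf x = G.edgeOf y ↔ G.α.SameCycle x y :=
  ⟨fun h => Quotient.exact h, fun h => Quotient.sound h⟩

lemma vertexOf_sigma (x : G.D) : G.vertexOf (G.σ x) = G.vertexOf x :=
  vertex_eq_iff.2 (Equiv.Perm.SameCycle.symm ⟨1, by simp⟩)

lemma vertexOf_phi (x : G.D) : G.vertexOf (G.φ x) = G.vertexOf (G.α x) := by
  rw [phi_apply]; exact vertexOf_sigma _

lemma faceOf_phi (x : G.D) : G.faceOf (G.φ x) = G.faceOf x :=
  face_eq_iff.2 (Equiv.Perm.SameCycle.symm ⟨1, by simp⟩)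

lemma mem_dartsAt {v : G.Vertex} {d : G.D} : d ∈ G.dartsAt v ↔ G.vertexOf d = v := by
  simp [dartsAt]

lemma mem_dartsOfFace {f : G.Face} {d : G.D} : d ∈ G.dartsOfFace f ↔ G.faceOf d = f := by
  simp [dartsOfFace]

lemma alpha_eq_of_edge {x y : G.D} (h : G.edgeOf x = G.edgeOf y) : y = x ∨ y = G.α x := by
  obtain ⟨i, hi⟩ := edge_eq_iff.1 h
  have hsq : G.α ^ (2 : ℤ) = 1 := by
    ext d
    simp [zpow_two, pow_two, Equiv.Perm.mul_apply, G.α_invol d]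
  rcases Int.even_or_odd i with ⟨j, hj⟩ | ⟨j, hj⟩
  · left
    have hone : G.α ^ i = 1 := by
      rw [hj, ← two_mul, zpow_mul, hsq, one_zpow]
    rw [hone] at hi
    simpa using hi.symm
  · right
    have hodd : G.α ^ i = G.α := by
      rw [hj, zpow_add, zpow_mul, hsq, one_zpow, one_mul, zpow_one]
    rw [hodd] at hi
    exact hi.symm

lemma sigma_ne (hdeg : ∀ v, 3 ≤ G.degree v) (x : G.D) : G.σ x ≠ x := by
  intro hfix
  have h1 : G.dartsAt (G.vertexOf x) = {x} := by
    ext d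
    simp only [mem_dartsAt, Finset.mem_singleton]
    constructor
    · intro h
      obtain ⟨i, hi⟩ := vertex_eq_iff.1 h
      have h2 := Equiv.Perm.zpow_apply_eq_self_of_apply_eq_self hfix (-i)
      have h3 : (G.σ ^ (-i)) ((G.σ ^ i) d) = (G.σ ^ (-i)) x := by rw [hi]
      rw [← Equiv.Perm.mul_apply, ← zpow_add, neg_add_cancel, zpow_zero, h2] at h3
      simpa using h3
    · rintro rfl; rfl
  have := hdeg (G.vertexOf x)
  rw [degree, h1] at this
  simp at this

lemma no_ret1 (hL : G.Loopless) {x : G.D} (h : G.vertexOf (G.φ x) = G.vertexOf x) : False := by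
  rw [vertexOf_phi] at h; exact hL x h

lemma no_ret2 (hL : G.Loopless) (hM : G.NoMultiEdges) (hdeg : ∀ v, 3 ≤ G.degree v)
    {x : G.D} (h : G.vertexOf (G.φ (G.φ x)) = G.vertexOf x) : False := by
  have h1 : G.vertexOf x = G.vertexOf (G.α (G.φ x)) := by
    rw [← h, phi_apply (G.φ x), vertexOf_sigma]
  have h2 : G.vertexOf (G.α x) = G.vertexOf (G.α (G.α (G.φ x))) := by
    rw [G.α_invol, vertexOf_phi]
  have hE := hM x (G.α (G.φ x)) h1 h2
  rcases alpha_eq_of_edge hE with h3 | h3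
  · -- α (φ x) = x : then φ x = α x, so σ fixes α x
    have h4 : G.φ x = G.α x := by
      have := congrArg G.α h3
      rwa [G.α_invol] at this
    have h5 : G.σ (G.α x) = G.α x := by rw [← phi_apply, h4]
    exact sigma_ne hdeg _ h5
  · -- α (φ x) = α x : then φ x = x, loop
    have h4 : G.φ x = x := by
      have := congrArg G.α h3
      rwa [G.α_invol, G.α_invol] at this
    exact no_ret1 hL (x := x) (by rw [h4])

lemma phi3_ne_sigma (hL : G.Loopless) (x : G.D) : G.φ (G.φ (G.φ x)) ≠ G.σ x := by
  intro h
  have h1 : G.α (G.φ (G.φ x)) = x := G.σ.injective h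
  have h2 : G.φ (G.φ x) = G.α x := by
    have := congrArg G.α h1
    rwa [G.α_invol] at this
  have h3 : G.σ (G.α (G.φ x)) = G.α x := by rw [← phi_apply, h2]
  have h4 : G.vertexOf (G.α (G.φ x)) = G.vertexOf (G.α x) := by
    rw [← h3, vertexOf_sigma]
  exact hL (G.φ x) (h4.trans (vertexOf_phi x).symm)

lemma pow_mul_fix {β : Type*} (p : Equiv.Perm β) {x : β} {n : ℕ} (hn : (p ^ n) x = x)
    (q : ℕ) : (p ^ (n * q)) x = x := by
  induction q with
  | zero => simp
  | succ q ih => rw [Nat.mul_succ, pow_add, Equiv.Perm.mul_apply, hn, ih]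

lemma pow_mod_apply {β : Type*} (p : Equiv.Perm β) {x : β} {n : ℕ} (hn : (p ^ n) x = x)
    (m : ℕ) : (p ^ m) x = (p ^ (m % n)) x := by
  have hm : m % n + n * (m / n) = m := by
    have := Nat.div_add_mod m n; omega
  conv_lhs => rw [← hm]
  rw [pow_add, Equiv.Perm.mul_apply, pow_mul_fix p hn]

lemma orbit_lemma {β : Type*} [Fintype β] (p : Equiv.Perm β) (x : β) (hx : p x ≠ x)
    (s : Finset β) (hs : ∀ y, y ∈ s ↔ p.SameCycle x y) :
    (p ^ s.card) x = x ∧ ∀ y ∈ s, ∃ k, k < s.card ∧ (p ^ k) x = y := by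
  classical
  have hsupp : s = (p.cycleOf x).support := by
    ext y
    rw [hs, Equiv.Perm.mem_support_cycleOf_iff]
    simp [Equiv.Perm.mem_support, hx]
  have hcyc := p.isCycle_cycleOf hx
  have hord : orderOf (p.cycleOf x) = s.card := by rw [hsupp]; exact hcyc.orderOf
  have hpow : (p ^ s.card) x = x := by
    rw [← Equiv.Perm.cycleOf_pow_apply_self, ← hord, pow_orderOf_eq_one]
    rfl
  refine ⟨hpow, fun y hy => ?_⟩
  obtain ⟨i, _, hiy⟩ := Equiv.Perm.SameCycle.exists_pow_eq' ((hs y).1 hy)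
  have hcardpos : 0 < s.card := Finset.card_pos.2 ⟨x, (hs x).2 (Equiv.Perm.SameCycle.refl _ _)⟩
  exact ⟨i % s.card, Nat.mod_lt _ hcardpos, by rw [← pow_mod_apply p hpow i, hiy]⟩

lemma pow3_apply {β : Type*} (p : Equiv.Perm β) (x : β) : (p ^ 3) x = p (p (p x)) := by
  simp [pow_succ, Equiv.Perm.mul_apply]

lemma three_le_faceSize (hL : G.Loopless) (hM : G.NoMultiEdges) (hdeg : ∀ v, 3 ≤ G.degree v)
    (x : G.D) : 3 ≤ G.faceSize (G.faceOf x) := by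
  classical
  have h1 : G.φ x ≠ x := fun h => no_ret1 hL (x := x) (by rw [h])
  have h2 : G.φ (G.φ x) ≠ x := fun h => no_ret2 hL hM hdeg (x := x) (by rw [h])
  have h3 : G.φ (G.φ x) ≠ G.φ x := fun h => no_ret1 hL (x := G.φ x) (by rw [h])
  have hsub : ({x, G.φ x, G.φ (G.φ x)} : Finset G.D) ⊆ G.dartsOfFace (G.faceOf x) := by
    intro d hd
    simp only [Finset.mem_insert, Finset.mem_singleton] at hd
    rcases hd with rfl | rfl | rfl
    · exact mem_dartsOfFace.2 rfl
    · exact mem_dartsOfFace.2 (faceOf_phi x)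
    · exact mem_dartsOfFace.2 ((faceOf_phi _).trans (faceOf_phi x))
  have hcard : ({x, G.φ x, G.φ (G.φ x)} : Finset G.D).card = 3 := by
    have e1 : x ∉ ({G.φ x, G.φ (G.φ x)} : Finset G.D) := by
      simp only [Finset.mem_insert, Finset.mem_singleton]
      push_neg
      exact ⟨fun h => h1 h.symm, fun h => h2 h.symm⟩
    have e2 : G.φ x ∉ ({G.φ (G.φ x)} : Finset G.D) := by
      simp only [Finset.mem_singleton]
      exact fun h => h3 h.symm
    rw [Finset.card_insert_of_notMem e1, Finset.card_insert_of_notMem e2,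
      Finset.card_singleton]
  have := Finset.card_le_card hsub
  rw [hcard] at this
  exact this


lemma curv_bound (hdeg : ∀ v, 3 ≤ G.degree v) (hcurv : ∀ v, 0 < G.curvature v)
    (hL : G.Loopless) (hM : G.NoMultiEdges)
    {d1 d2 : G.D} (hne : d1 ≠ d2) (hv : G.vertexOf d2 = G.vertexOf d1)
    (hf : G.faceOf d2 = G.faceOf d1) :
    G.faceSize (G.faceOf d1) * (G.degree (G.vertexOf d1) - 2) < 12 := by
  classical
  set v := G.vertexOf d1 with hvdef
  set n := G.faceSize (G.faceOf d1) with hndef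
  set D := G.degree v with hDdef
  have hDcard : (G.dartsAt v).card = D := rfl
  have hD : 3 ≤ D := hdeg v
  have hn : 3 ≤ n := three_le_faceSize hL hM hdeg d1
  have hsub : ({d1, d2} : Finset G.D) ⊆ G.dartsAt v := by
    intro d hd
    simp only [Finset.mem_insert, Finset.mem_singleton] at hd
    rcases hd with rfl | rfl
    · exact mem_dartsAt.2 rfl
    · exact mem_dartsAt.2 hv
  have hsplit := Finset.sum_sdiff (f := fun d => (1 : ℚ) / (G.faceSize (G.faceOf d))) hsub
  have hpair : ∑ d ∈ ({d1, d2} : Finset G.D), (1 : ℚ) / (G.faceSize (G.faceOf d))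
      = 2 / (n : ℚ) := by
    rw [Finset.sum_pair hne, hf, ← hndef]
    ring
  have hrest : ∑ d ∈ G.dartsAt v \ {d1, d2}, (1 : ℚ) / (G.faceSize (G.faceOf d))
      ≤ ((D : ℚ) - 2) * (1 / 3 : ℚ) := by
    have hb : ∀ x ∈ G.dartsAt v \ {d1, d2},
        (1 : ℚ) / (G.faceSize (G.faceOf x)) ≤ (1 / 3 : ℚ) := by
      intro x _
      have h3 : (3 : ℚ) ≤ (G.faceSize (G.faceOf x) : ℚ) := by
        exact_mod_cast three_le_faceSize hL hM hdeg x
      exact one_div_le_one_div_of_le (by norm_num) h3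
    have h := Finset.sum_le_card_nsmul (G.dartsAt v \ {d1, d2}) _ (1 / 3 : ℚ) hb
    rw [Finset.card_sdiff_of_subset hsub, Finset.card_pair hne, hDcard] at h
    have hc : ((D - 2 : ℕ) : ℚ) = (D : ℚ) - 2 := by
      have h2 : 2 ≤ D := by omega
      push_cast [h2]
      ring
    calc ∑ d ∈ G.dartsAt v \ {d1, d2}, (1 : ℚ) / (G.faceSize (G.faceOf d))
        ≤ (D - 2 : ℕ) • (1 / 3 : ℚ) := h
      _ = ((D : ℚ) - 2) * (1 / 3 : ℚ) := by rw [nsmul_eq_mul, hc]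
  have hcv := hcurv v
  simp only [curvature] at hcv
  rw [← hDdef] at hcv
  rw [← hsplit, hpair] at hcv
  have key : 0 < 1 - (D : ℚ) / 2 + (((D : ℚ) - 2) * (1 / 3) + 2 / (n : ℚ)) := by
    linarith [hrest]
  have hnpos : (0 : ℚ) < (n : ℚ) := by exact_mod_cast (by omega : 0 < n)
  have hkey2 : 0 < (1 - (D : ℚ) / 2 + (((D : ℚ) - 2) * (1 / 3) + 2 / (n : ℚ))) * (n : ℚ) :=
    mul_pos key hnpos
  have hexp : (1 - (D : ℚ) / 2 + (((D : ℚ) - 2) * (1 / 3) + 2 / (n : ℚ))) * (n : ℚ)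
      = (n : ℚ) - (D : ℚ) * (n : ℚ) / 2 + (((D : ℚ) - 2) * (n : ℚ) / 3 + 2) := by
    field_simp
  rw [hexp] at hkey2
  have hq : (n : ℚ) * ((D : ℚ) - 2) < 12 := by nlinarith [hkey2]
  have hcast : ((n * (D - 2) : ℕ) : ℚ) = (n : ℚ) * ((D : ℚ) - 2) := by
    rw [Nat.cast_mul, Nat.cast_sub (by omega : 2 ≤ D)]
    norm_num
  have hfin : ((n * (D - 2) : ℕ) : ℚ) < 12 := by rw [hcast]; exact hq
  exact_mod_cast hfin

end PlaneGraph

/-- If the multiset of boundary vertices of a face of a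
planar PCC graph is not a set, or if the multiset of its boundary edges is
not a set, then the size of the face is between 7 and 11. -/
theorem pcc_face_with_repeated_boundary (G : PlaneGraph) (hG : G.IsPCC)
    (f : G.Face)
    (h : ¬(G.boundaryVertices f).Nodup ∨ ¬(G.boundaryEdges f).Nodup) :
    7 ≤ G.faceSize f ∧ G.faceSize f ≤ 11 := by
  classical
  obtain ⟨-, hL, hM, -, hdeg, hcurv, -, -⟩ := hG
  open PlaneGraph in
  have key : ∃ d1 d2 : G.D, d1 ≠ d2 ∧ G.faceOf d1 = f ∧ G.faceOf d2 = f ∧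
      G.vertexOf d2 = G.vertexOf d1 := by
    rcases h with h | h
    · rw [PlaneGraph.boundaryVertices,
        Multiset.nodup_map_iff_inj_on (G.dartsOfFace f).nodup] at h
      push_neg at h
      obtain ⟨x, hx, y, hy, hxy, hne⟩ := h
      exact ⟨x, y, hne, PlaneGraph.mem_dartsOfFace.1 (Finset.mem_def.2 hx),
        PlaneGraph.mem_dartsOfFace.1 (Finset.mem_def.2 hy), hxy.symm⟩
    · rw [PlaneGraph.boundaryEdges,
        Multiset.nodup_map_iff_inj_on (G.dartsOfFace f).nodup] at h
      push_neg at h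
      obtain ⟨x, hx, y, hy, hxy, hne⟩ := h
      have hy' : y = G.α x :=
        (PlaneGraph.alpha_eq_of_edge hxy).resolve_left (fun hh => hne hh.symm)
      refine ⟨x, G.σ x, fun hh => PlaneGraph.sigma_ne hdeg x hh.symm,
        PlaneGraph.mem_dartsOfFace.1 (Finset.mem_def.2 hx), ?_,
        PlaneGraph.vertexOf_sigma x⟩
      have hsp : G.σ x = G.φ (G.α x) := by rw [PlaneGraph.phi_apply, G.α_invol]
      rw [hsp, PlaneGraph.faceOf_phi, ← hy']
      exact PlaneGraph.mem_dartsOfFace.1 (Finset.mem_def.2 hy)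
  obtain ⟨d1, d2, hne, hf1, hf2, hv⟩ := key
  have hprod := PlaneGraph.curv_bound hdeg hcurv hL hM hne hv (hf2.trans hf1.symm)
  rw [hf1] at hprod
  have hD3 : 3 ≤ G.degree (G.vertexOf d1) := hdeg _
  set n := G.faceSize f with hndef
  set D := G.degree (G.vertexOf d1) with hDdef
  have hn3 : 3 ≤ n := by
    rw [hndef, ← hf1]
    exact PlaneGraph.three_le_faceSize hL hM hdeg d1
  have hupper : n ≤ 11 := by
    have h1 : n ≤ n * (D - 2) := Nat.le_mul_of_pos_right n (by omega)
    omega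
  refine ⟨?_, hupper⟩
  by_contra hlt
  push_neg at hlt
  -- now n ≤ 6
  have hphid1 : G.φ d1 ≠ d1 := fun hh => PlaneGraph.no_ret1 hL (x := d1) (by rw [hh])
  have hsF : ∀ y, y ∈ G.dartsOfFace f ↔ G.φ.SameCycle d1 y := by
    intro y
    rw [PlaneGraph.mem_dartsOfFace, ← hf1, eq_comm]
    exact PlaneGraph.face_eq_iff
  obtain ⟨hfixF, hexF⟩ := PlaneGraph.orbit_lemma G.φ d1 hphid1 (G.dartsOfFace f) hsF
  have hcardF : (G.dartsOfFace f).card = n := rfl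
  rw [hcardF] at hfixF hexF
  obtain ⟨k, hk, hk2⟩ := hexF d2 (PlaneGraph.mem_dartsOfFace.2 hf2)
  have hk0 : k ≠ 0 := by
    rintro rfl
    rw [pow_zero] at hk2
    exact hne (by simpa using hk2)
  have hback : (G.φ ^ (n - k)) d2 = d1 := by
    rw [← hk2, ← Equiv.Perm.mul_apply, ← pow_add]
    have hnk : n - k + k = n := by omega
    rw [hnk]
    exact hfixF
  have hknot1 : k ≠ 1 := by
    rintro rfl
    rw [pow_one] at hk2
    exact PlaneGraph.no_ret1 hL (x := d1) (by rw [hk2]; exact hv)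
  have hknot2 : k ≠ 2 := by
    rintro rfl
    have h2 : G.φ (G.φ d1) = d2 := by
      rw [← hk2]
      simp [pow_succ, Equiv.Perm.mul_apply]
    exact PlaneGraph.no_ret2 hL hM hdeg (x := d1) (by rw [h2]; exact hv)
  have hnknot1 : n - k ≠ 1 := by
    intro hh
    rw [hh, pow_one] at hback
    exact PlaneGraph.no_ret1 hL (x := d2) (by rw [hback]; exact hv.symm)
  have hnknot2 : n - k ≠ 2 := by
    intro hh
    rw [hh] at hback
    have h2 : G.φ (G.φ d2) = d1 := by
      rw [← hback]
      simp [pow_succ, Equiv.Perm.mul_apply]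
    exact PlaneGraph.no_ret2 hL hM hdeg (x := d2) (by rw [h2]; exact hv.symm)
  have hn6 : n = 6 := by omega
  have hk3 : k = 3 := by omega
  have hD3' : D = 3 := by
    rw [hn6] at hprod
    omega
  have hsd1 : G.σ d1 ≠ d1 := PlaneGraph.sigma_ne hdeg d1
  have hsV : ∀ y, y ∈ G.dartsAt (G.vertexOf d1) ↔ G.σ.SameCycle d1 y := by
    intro y
    rw [PlaneGraph.mem_dartsAt, eq_comm]
    exact PlaneGraph.vertex_eq_iff
  obtain ⟨hfixV, hexV⟩ :=
    PlaneGraph.orbit_lemma G.σ d1 hsd1 (G.dartsAt (G.vertexOf d1)) hsV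
  have hcardV : (G.dartsAt (G.vertexOf d1)).card = 3 := by
    rw [show (G.dartsAt (G.vertexOf d1)).card = D from rfl]
    exact hD3'
  rw [hcardV] at hfixV hexV
  obtain ⟨m, hm, hm2⟩ := hexV d2 (PlaneGraph.mem_dartsAt.2 hv)
  have hm0 : m ≠ 0 := by
    rintro rfl
    rw [pow_zero] at hm2
    exact hne (by simpa using hm2)
  have hphi3 : (G.φ ^ 3) d1 = d2 := by rw [← hk3]; exact hk2
  rcases (by omega : m = 1 ∨ m = 2) with rfl | rfl
  · rw [pow_one] at hm2
    exact PlaneGraph.phi3_ne_sigma hL d1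
      (by rw [← PlaneGraph.pow3_apply, hphi3]; exact hm2.symm)
  · have hσ2 : G.σ (G.σ d1) = d2 := by
      rw [← hm2]
      simp [pow_succ, Equiv.Perm.mul_apply]
    have hσd2 : G.σ d2 = d1 := by
      rw [← hσ2, show G.σ (G.σ (G.σ d1)) = (G.σ ^ 3) d1 from (PlaneGraph.pow3_apply _ _).symm]
      exact hfixV
    have hphi6 : (G.φ ^ 3) d2 = d1 := by
      rw [← hphi3, ← Equiv.Perm.mul_apply, ← pow_add]
      rw [show (3 + 3 : ℕ) = 6 from rfl, ← hn6]
      exact hfixF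
    exact PlaneGraph.phi3_ne_sigma hL d2
      (by rw [← PlaneGraph.pow3_apply, hphi6]; exact hσd2.symm)
end

section
/- Let d ≥ 3 and let a₁ ≤ a₂ ≤ … ≤ a_d be integers with a₁ ≥ 3. Then 1 − d/2 + Σ_{i=1}^{d} 1/aᵢ > 0 if and only if the ordered tuple (a₁,…,a_d) is one of the following: (3,a,b) with 3 ≤ a ≤ 6 and a ≤ b; (3,7,a) with 7 ≤ a ≤ 41; (3,8,a) with 8 ≤ a ≤ 23; (3,9,a) with 9 ≤ a ≤ 17; (3,10,a) with 10 ≤ a ≤ 14; (3,11,a) with 11 ≤ a ≤ 13; (4,4,a) with 4 ≤ a; (4,5,a) with 5 ≤ a ≤ 19; (4,6,a) with 6 ≤ a ≤ 11; (4,7,a) with 7 ≤ a ≤ 9; (5,5,a) with 5 ≤ a ≤ 9; (5,6,6); (5,6,7); (3,3,3,a) with 3 ≤ a; (3,3,4,a) with 4 ≤ a ≤ 11; (3,3,5,a) with 5 ≤ a ≤ 7; (3,4,4,a) with 4 ≤ a ≤ 5; (3,3,3,3,a) with 3 ≤ a ≤ 5. -/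
lemma face_key3 (a b c : ℕ) (ha : 3 ≤ a) (hb : 3 ≤ b) (hc : 3 ≤ c) :
    (0 < 1 - (3:ℚ)/2 + ((1:ℚ)/a + (1:ℚ)/b + (1:ℚ)/c)) ↔
      a*b*c < 2*(a*b + b*c + a*c) := by
  have ha' : (0:ℚ) < a := by exact_mod_cast show 0 < a by omega
  have hb' : (0:ℚ) < b := by exact_mod_cast show 0 < b by omega
  have hc' : (0:ℚ) < c := by exact_mod_cast show 0 < c by omega
  have key : (1 - (3:ℚ)/2 + ((1:ℚ)/a + (1:ℚ)/b + (1:ℚ)/c)) * (2*((a:ℚ)*b*c))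
      = 2*((a:ℚ)*b + b*c + a*c) - a*b*c := by
    field_simp
    ring
  have hpos : (0:ℚ) < 2*((a:ℚ)*b*c) := by positivity
  rw [← mul_pos_iff_of_pos_right hpos, key, sub_pos]
  constructor
  · intro h; exact_mod_cast h
  · intro h; exact_mod_cast h

lemma face_key4 (a b c d : ℕ) (ha : 3 ≤ a) (hb : 3 ≤ b) (hc : 3 ≤ c) (hd : 3 ≤ d) :
    (0 < 1 - (4:ℚ)/2 + ((1:ℚ)/a + (1:ℚ)/b + (1:ℚ)/c + (1:ℚ)/d)) ↔
      a*b*c*d < b*c*d + a*c*d + a*b*d + a*b*c := by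
  have ha' : (0:ℚ) < a := by exact_mod_cast show 0 < a by omega
  have hb' : (0:ℚ) < b := by exact_mod_cast show 0 < b by omega
  have hc' : (0:ℚ) < c := by exact_mod_cast show 0 < c by omega
  have hd' : (0:ℚ) < d := by exact_mod_cast show 0 < d by omega
  have key : (1 - (4:ℚ)/2 + ((1:ℚ)/a + (1:ℚ)/b + (1:ℚ)/c + (1:ℚ)/d)) * ((a:ℚ)*b*c*d)
      = ((b:ℚ)*c*d + a*c*d + a*b*d + a*b*c) - a*b*c*d := by
    field_simp
    ring
  have hpos : (0:ℚ) < (a:ℚ)*b*c*d := by positivity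
  rw [← mul_pos_iff_of_pos_right hpos, key, sub_pos]
  constructor
  · intro h; exact_mod_cast h
  · intro h; exact_mod_cast h

lemma face_key5 (a b c d e : ℕ) (ha : 3 ≤ a) (hb : 3 ≤ b) (hc : 3 ≤ c) (hd : 3 ≤ d)
    (he : 3 ≤ e) :
    (0 < 1 - (5:ℚ)/2 + ((1:ℚ)/a + (1:ℚ)/b + (1:ℚ)/c + (1:ℚ)/d + (1:ℚ)/e)) ↔
      3*(a*b*c*d*e) < 2*(b*c*d*e + a*c*d*e + a*b*d*e + a*b*c*e + a*b*c*d) := by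
  have ha' : (0:ℚ) < a := by exact_mod_cast show 0 < a by omega
  have hb' : (0:ℚ) < b := by exact_mod_cast show 0 < b by omega
  have hc' : (0:ℚ) < c := by exact_mod_cast show 0 < c by omega
  have hd' : (0:ℚ) < d := by exact_mod_cast show 0 < d by omega
  have he' : (0:ℚ) < e := by exact_mod_cast show 0 < e by omega
  have key : (1 - (5:ℚ)/2 + ((1:ℚ)/a + (1:ℚ)/b + (1:ℚ)/c + (1:ℚ)/d + (1:ℚ)/e))
        * (2*((a:ℚ)*b*c*d*e))
      = 2*((b:ℚ)*c*d*e + a*c*d*e + a*b*d*e + a*b*c*e + a*b*c*d) - 3*((a:ℚ)*b*c*d*e) := by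
    field_simp
    ring
  have hpos : (0:ℚ) < 2*((a:ℚ)*b*c*d*e) := by positivity
  rw [← mul_pos_iff_of_pos_right hpos, key, sub_pos]
  constructor
  · intro h; exact_mod_cast h
  · intro h; exact_mod_cast h

lemma face_sum_bound (l : List ℕ) (h : ∀ a ∈ l, 3 ≤ a) :
    (l.map fun a => (1 : ℚ) / a).sum ≤ (l.length : ℚ)/3 := by
  induction l with
  | nil => simp
  | cons x xs ih =>
    have h2 := ih (fun a ha => h a (List.mem_cons_of_mem _ ha))
    have hx : 3 ≤ x := h x List.mem_cons_self
    have hx' : (3:ℚ) ≤ x := by exact_mod_cast hx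
    have h1 : (1:ℚ)/x ≤ 1/3 := by
      apply one_div_le_one_div_of_le <;> linarith
    have hdec : ((x::xs : List ℕ).map fun a => (1 : ℚ) / a).sum
        = (1:ℚ)/x + (xs.map fun a => (1 : ℚ) / a).sum := by
      simp
    rw [hdec]
    simp only [List.length_cons, Nat.cast_add, Nat.cast_one]
    linarith

lemma face_br1 (x y : ℕ) (hx3 : 3 ≤ x) (hx6 : x ≤ 6) (hxy : x ≤ y) (h3y : 3 ≤ y) :
    3*x*y < 2*(3*x + x*y + 3*y) := by
  nlinarith [Nat.mul_le_mul hx6 (le_refl y)]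

set_option maxHeartbeats 1000000 in
/-- Characterization of the admissible face vectors: for a
nondecreasing list `l = [a₁, …, a_d]` of integers with `d ≥ 3` and `a₁ ≥ 3`,
the curvature expression `1 - d/2 + ∑ᵢ 1/aᵢ` is strictly positive if and only
if the tuple is one of those listed in Table 1 of the paper. -/
theorem admissible_face_vectors (l : List ℕ) (hlen : 3 ≤ l.length)
    (hsorted : l.Pairwise (· ≤ ·)) (hge3 : ∀ a ∈ l, 3 ≤ a) :
    (0 < 1 - (l.length : ℚ) / 2 + (l.map fun a => (1 : ℚ) / a).sum) ↔
      ((∃ a b : ℕ, l = [3, a, b] ∧ 3 ≤ a ∧ a ≤ 6 ∧ a ≤ b) ∨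
        (∃ a : ℕ, l = [3, 7, a] ∧ 7 ≤ a ∧ a ≤ 41) ∨
        (∃ a : ℕ, l = [3, 8, a] ∧ 8 ≤ a ∧ a ≤ 23) ∨
        (∃ a : ℕ, l = [3, 9, a] ∧ 9 ≤ a ∧ a ≤ 17) ∨
        (∃ a : ℕ, l = [3, 10, a] ∧ 10 ≤ a ∧ a ≤ 14) ∨
        (∃ a : ℕ, l = [3, 11, a] ∧ 11 ≤ a ∧ a ≤ 13) ∨
        (∃ a : ℕ, l = [4, 4, a] ∧ 4 ≤ a) ∨
        (∃ a : ℕ, l = [4, 5, a] ∧ 5 ≤ a ∧ a ≤ 19) ∨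
        (∃ a : ℕ, l = [4, 6, a] ∧ 6 ≤ a ∧ a ≤ 11) ∨
        (∃ a : ℕ, l = [4, 7, a] ∧ 7 ≤ a ∧ a ≤ 9) ∨
        (∃ a : ℕ, l = [5, 5, a] ∧ 5 ≤ a ∧ a ≤ 9) ∨
        l = [5, 6, 6] ∨
        l = [5, 6, 7] ∨
        (∃ a : ℕ, l = [3, 3, 3, a] ∧ 3 ≤ a) ∨
        (∃ a : ℕ, l = [3, 3, 4, a] ∧ 4 ≤ a ∧ a ≤ 11) ∨
        (∃ a : ℕ, l = [3, 3, 5, a] ∧ 5 ≤ a ∧ a ≤ 7) ∨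
        (∃ a : ℕ, l = [3, 4, 4, a] ∧ 4 ≤ a ∧ a ≤ 5) ∨
        (∃ a : ℕ, l = [3, 3, 3, 3, a] ∧ 3 ≤ a ∧ a ≤ 5)) := by
  obtain ⟨a, b, c, rest, rfl⟩ : ∃ a b c rest, l = a :: b :: c :: rest := by
    rcases l with _ | ⟨a, _ | ⟨b, _ | ⟨c, r⟩⟩⟩
    · simp at hlen
    · simp at hlen
    · simp at hlen
    · exact ⟨a, b, c, r, rfl⟩
  have h3a : 3 ≤ a := hge3 a (by simp)
  have h3b : 3 ≤ b := hge3 b (by simp)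
  have h3c : 3 ≤ c := hge3 c (by simp)
  have hab : a ≤ b := (List.pairwise_cons.mp hsorted).1 b (by simp)
  have hs2 := (List.pairwise_cons.mp hsorted).2
  have hbc : b ≤ c := (List.pairwise_cons.mp hs2).1 c (by simp)
  have hs3 := (List.pairwise_cons.mp hs2).2
  rcases rest with _ | ⟨d, rest2⟩
  · -- length 3
    have e1 : (([a,b,c] : List ℕ).map fun x => (1 : ℚ) / x).sum
        = (1:ℚ)/a + (1:ℚ)/b + (1:ℚ)/c := by simp; ring
    have e2 : ((([a,b,c] : List ℕ).length : ℚ)) = 3 := by norm_num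
    rw [e2, e1, face_key3 a b c h3a h3b h3c]
    constructor
    · intro h
      have ha5 : a ≤ 5 := by
        by_contra hcon
        push_neg at hcon
        nlinarith [Nat.mul_le_mul hab hbc, Nat.mul_le_mul hab (le_refl c),
          Nat.mul_le_mul (show 6 ≤ a by omega) (le_refl (b*c))]
      interval_cases a
      · -- a = 3
        have hb11 : b ≤ 11 := by
          by_contra hcon
          push_neg at hcon
          nlinarith [Nat.mul_le_mul (show 12 ≤ b by omega) (le_refl c), hbc, h]
        interval_cases b
        · exact Or.inl ⟨3, c, rfl, by norm_num, by norm_num, hbc⟩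
        · exact Or.inl ⟨4, c, rfl, by norm_num, by norm_num, hbc⟩
        · exact Or.inl ⟨5, c, rfl, by norm_num, by norm_num, hbc⟩
        · exact Or.inl ⟨6, c, rfl, by norm_num, by norm_num, hbc⟩
        · exact Or.inr (Or.inl ⟨c, rfl, hbc, by omega⟩)
        · exact Or.inr (Or.inr (Or.inl ⟨c, rfl, hbc, by omega⟩))
        · exact Or.inr (Or.inr (Or.inr (Or.inl ⟨c, rfl, hbc, by omega⟩)))
        · exact Or.inr (Or.inr (Or.inr (Or.inr (Or.inl ⟨c, rfl, hbc, by omega⟩))))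
        · exact Or.inr (Or.inr (Or.inr (Or.inr (Or.inr (Or.inl ⟨c, rfl, hbc, by omega⟩)))))
      · -- a = 4
        have hb7 : b ≤ 7 := by
          by_contra hcon
          push_neg at hcon
          nlinarith [Nat.mul_le_mul (show 8 ≤ b by omega) (le_refl c), hbc, h]
        interval_cases b
        · exact Or.inr (Or.inr (Or.inr (Or.inr (Or.inr (Or.inr (Or.inl ⟨c, rfl, hbc⟩))))))
        · exact Or.inr (Or.inr (Or.inr (Or.inr (Or.inr (Or.inr (Or.inr (Or.inl
            ⟨c, rfl, hbc, by omega⟩)))))))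
        · exact Or.inr (Or.inr (Or.inr (Or.inr (Or.inr (Or.inr (Or.inr (Or.inr (Or.inl
            ⟨c, rfl, hbc, by omega⟩))))))))
        · exact Or.inr (Or.inr (Or.inr (Or.inr (Or.inr (Or.inr (Or.inr (Or.inr (Or.inr
            (Or.inl ⟨c, rfl, hbc, by omega⟩)))))))))
      · -- a = 5
        have hb6 : b ≤ 6 := by
          by_contra hcon
          push_neg at hcon
          nlinarith [Nat.mul_le_mul (show 7 ≤ b by omega) (le_refl c), hbc, h]
        interval_cases b
        · exact Or.inr (Or.inr (Or.inr (Or.inr (Or.inr (Or.inr (Or.inr (Or.inr (Or.inr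
            (Or.inr (Or.inl ⟨c, rfl, hbc, by omega⟩))))))))))
        · -- b = 6
          have hc7 : c ≤ 7 := by omega
          interval_cases c
          · exact Or.inr (Or.inr (Or.inr (Or.inr (Or.inr (Or.inr (Or.inr (Or.inr (Or.inr
              (Or.inr (Or.inr (Or.inl rfl)))))))))))
          · exact Or.inr (Or.inr (Or.inr (Or.inr (Or.inr (Or.inr (Or.inr (Or.inr (Or.inr
              (Or.inr (Or.inr (Or.inr (Or.inl rfl))))))))))))
    · rintro (⟨x, y, hl, hx3, hx6, hxy⟩ | ⟨x, hl, hx1, hx2⟩ | ⟨x, hl, hx1, hx2⟩ |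
        ⟨x, hl, hx1, hx2⟩ | ⟨x, hl, hx1, hx2⟩ | ⟨x, hl, hx1, hx2⟩ | ⟨x, hl, hx1⟩ |
        ⟨x, hl, hx1, hx2⟩ | ⟨x, hl, hx1, hx2⟩ | ⟨x, hl, hx1, hx2⟩ | ⟨x, hl, hx1, hx2⟩ |
        hl | hl | ⟨x, hl, hx1⟩ | ⟨x, hl, hx1, hx2⟩ | ⟨x, hl, hx1, hx2⟩ |
        ⟨x, hl, hx1, hx2⟩ | ⟨x, hl, hx1, hx2⟩) <;>
      simp only [List.cons.injEq, and_true] at hl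
      · obtain ⟨rfl, rfl, rfl⟩ := hl
        exact face_br1 _ _ hx3 hx6 hxy (by omega)
      · obtain ⟨rfl, rfl, rfl⟩ := hl; omega
      · obtain ⟨rfl, rfl, rfl⟩ := hl; omega
      · obtain ⟨rfl, rfl, rfl⟩ := hl; omega
      · obtain ⟨rfl, rfl, rfl⟩ := hl; omega
      · obtain ⟨rfl, rfl, rfl⟩ := hl; omega
      · obtain ⟨rfl, rfl, rfl⟩ := hl; omega
      · obtain ⟨rfl, rfl, rfl⟩ := hl; omega
      · obtain ⟨rfl, rfl, rfl⟩ := hl; omega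
      · obtain ⟨rfl, rfl, rfl⟩ := hl; omega
      · obtain ⟨rfl, rfl, rfl⟩ := hl; omega
      · obtain ⟨rfl, rfl, rfl⟩ := hl; norm_num
      · obtain ⟨rfl, rfl, rfl⟩ := hl; norm_num
      · simp at hl
      · simp at hl
      · simp at hl
      · simp at hl
      · simp at hl
  rcases rest2 with _ | ⟨e, rest3⟩
  · -- length 4
    have h3d : 3 ≤ d := hge3 d (by simp)
    have hcd : c ≤ d := (List.pairwise_cons.mp hs3).1 d (by simp)
    have e1 : (([a,b,c,d] : List ℕ).map fun x => (1 : ℚ) / x).sum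
        = (1:ℚ)/a + (1:ℚ)/b + (1:ℚ)/c + (1:ℚ)/d := by simp; ring
    have e2 : ((([a,b,c,d] : List ℕ).length : ℚ)) = 4 := by norm_num
    rw [e2, e1, face_key4 a b c d h3a h3b h3c h3d]
    constructor
    · intro h
      have ha3 : a ≤ 3 := by
        by_contra hcon
        push_neg at hcon
        nlinarith [Nat.mul_le_mul (show 4 ≤ a by omega) (le_refl (b*c*d)),
          Nat.mul_le_mul (Nat.mul_le_mul hab (le_refl c)) (le_refl d),
          Nat.mul_le_mul (Nat.mul_le_mul (le_trans hab hbc) (le_refl b)) (le_refl d),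
          Nat.mul_le_mul (Nat.mul_le_mul (le_trans hab (le_trans hbc hcd)) (le_refl b))
            (le_refl c)]
      have ha : a = 3 := le_antisymm ha3 h3a
      subst ha
      have hb4 : b ≤ 4 := by
        by_contra hcon
        push_neg at hcon
        nlinarith [Nat.mul_le_mul (show 5 ≤ b by omega) (le_refl (c*d)),
          Nat.mul_le_mul hbc (le_refl d),
          Nat.mul_le_mul (le_trans hbc hcd) (le_refl c), h]
      interval_cases b
      · -- b = 3
        have hc6 : c ≤ 6 := by
          by_contra hcon
          push_neg at hcon
          nlinarith [Nat.mul_le_mul (show 7 ≤ c by omega) (le_refl d), hcd, h]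
        interval_cases c
        · exact Or.inr (Or.inr (Or.inr (Or.inr (Or.inr (Or.inr (Or.inr (Or.inr (Or.inr
            (Or.inr (Or.inr (Or.inr (Or.inr (Or.inl ⟨d, rfl, h3d⟩)))))))))))))
        · exact Or.inr (Or.inr (Or.inr (Or.inr (Or.inr (Or.inr (Or.inr (Or.inr (Or.inr
            (Or.inr (Or.inr (Or.inr (Or.inr (Or.inr (Or.inl ⟨d, rfl, hcd, by omega⟩))))))))))))))
        · exact Or.inr (Or.inr (Or.inr (Or.inr (Or.inr (Or.inr (Or.inr (Or.inr (Or.inr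
            (Or.inr (Or.inr (Or.inr (Or.inr (Or.inr (Or.inr (Or.inl
            ⟨d, rfl, hcd, by omega⟩)))))))))))))))
        · exact absurd h (by omega)
      · -- b = 4
        have hc4 : c ≤ 4 := by
          by_contra hcon
          push_neg at hcon
          nlinarith [Nat.mul_le_mul (show 5 ≤ c by omega) (le_refl d), hcd, h]
        interval_cases c
        · exact Or.inr (Or.inr (Or.inr (Or.inr (Or.inr (Or.inr (Or.inr (Or.inr (Or.inr
            (Or.inr (Or.inr (Or.inr (Or.inr (Or.inr (Or.inr (Or.inr (Or.inl
            ⟨d, rfl, hcd, by omega⟩))))))))))))))))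
    · rintro (⟨x, y, hl, hx3, hx6, hxy⟩ | ⟨x, hl, hx1, hx2⟩ | ⟨x, hl, hx1, hx2⟩ |
        ⟨x, hl, hx1, hx2⟩ | ⟨x, hl, hx1, hx2⟩ | ⟨x, hl, hx1, hx2⟩ | ⟨x, hl, hx1⟩ |
        ⟨x, hl, hx1, hx2⟩ | ⟨x, hl, hx1, hx2⟩ | ⟨x, hl, hx1, hx2⟩ | ⟨x, hl, hx1, hx2⟩ |
        hl | hl | ⟨x, hl, hx1⟩ | ⟨x, hl, hx1, hx2⟩ | ⟨x, hl, hx1, hx2⟩ |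
        ⟨x, hl, hx1, hx2⟩ | ⟨x, hl, hx1, hx2⟩) <;>
      first
        | (simp only [List.cons.injEq, and_true] at hl;
           obtain ⟨rfl, rfl, rfl, rfl⟩ := hl; omega)
        | simp at hl
  rcases rest3 with _ | ⟨f, rest4⟩
  · -- length 5
    have h3d : 3 ≤ d := hge3 d (by simp)
    have h3e : 3 ≤ e := hge3 e (by simp)
    have hcd : c ≤ d := (List.pairwise_cons.mp hs3).1 d (by simp)
    have hs4 := (List.pairwise_cons.mp hs3).2
    have hde : d ≤ e := (List.pairwise_cons.mp hs4).1 e (by simp)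
    have e1 : (([a,b,c,d,e] : List ℕ).map fun x => (1 : ℚ) / x).sum
        = (1:ℚ)/a + (1:ℚ)/b + (1:ℚ)/c + (1:ℚ)/d + (1:ℚ)/e := by simp; ring
    have e2 : ((([a,b,c,d,e] : List ℕ).length : ℚ)) = 5 := by norm_num
    rw [e2, e1, face_key5 a b c d e h3a h3b h3c h3d h3e]
    constructor
    · intro h
      have hd3 : d ≤ 3 := by
        by_contra hcon
        push_neg at hcon
        have he4 : 4 ≤ e := le_trans hcon hde
        have f1 : 3*(b*c*d*e) ≤ a*b*c*d*e :=
          le_trans (Nat.mul_le_mul h3a (le_refl (b*c*d*e))) (le_of_eq (by ring))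
        have f2 : 3*(a*c*d*e) ≤ a*b*c*d*e :=
          le_trans (Nat.mul_le_mul h3b (le_refl (a*c*d*e))) (le_of_eq (by ring))
        have f3 : 3*(a*b*d*e) ≤ a*b*c*d*e :=
          le_trans (Nat.mul_le_mul h3c (le_refl (a*b*d*e))) (le_of_eq (by ring))
        have f4 : 4*(a*b*c*e) ≤ a*b*c*d*e :=
          le_trans (Nat.mul_le_mul (show 4 ≤ d by omega) (le_refl (a*b*c*e)))
            (le_of_eq (by ring))
        have f5 : 4*(a*b*c*d) ≤ a*b*c*d*e :=
          le_trans (Nat.mul_le_mul he4 (le_refl (a*b*c*d))) (le_of_eq (by ring))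
        have hX : 3*(a*b*c*d*e) < 2*(b*c*d*e + a*c*d*e + a*b*d*e + a*b*c*e + a*b*c*d) := h
        linarith [f1, f2, f3, f4, f5, hX]
      obtain ⟨rfl, rfl, rfl, rfl⟩ : a = 3 ∧ b = 3 ∧ c = 3 ∧ d = 3 := by omega
      refine Or.inr (Or.inr (Or.inr (Or.inr (Or.inr (Or.inr (Or.inr (Or.inr (Or.inr
        (Or.inr (Or.inr (Or.inr (Or.inr (Or.inr (Or.inr (Or.inr (Or.inr
        ⟨e, rfl, h3e, by omega⟩))))))))))))))))
    · rintro (⟨x, y, hl, hx3, hx6, hxy⟩ | ⟨x, hl, hx1, hx2⟩ | ⟨x, hl, hx1, hx2⟩ |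
        ⟨x, hl, hx1, hx2⟩ | ⟨x, hl, hx1, hx2⟩ | ⟨x, hl, hx1, hx2⟩ | ⟨x, hl, hx1⟩ |
        ⟨x, hl, hx1, hx2⟩ | ⟨x, hl, hx1, hx2⟩ | ⟨x, hl, hx1, hx2⟩ | ⟨x, hl, hx1, hx2⟩ |
        hl | hl | ⟨x, hl, hx1⟩ | ⟨x, hl, hx1, hx2⟩ | ⟨x, hl, hx1, hx2⟩ |
        ⟨x, hl, hx1, hx2⟩ | ⟨x, hl, hx1, hx2⟩) <;>
      first
        | (simp only [List.cons.injEq, and_true] at hl;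
           obtain ⟨rfl, rfl, rfl, rfl, rfl⟩ := hl; omega)
        | simp at hl
  · -- length ≥ 6
    apply iff_of_false
    · intro hpos
      have hs := face_sum_bound (a :: b :: c :: d :: e :: f :: rest4) hge3
      have hlen6 : (6:ℚ) ≤ ((a :: b :: c :: d :: e :: f :: rest4).length : ℚ) := by
        have : 6 ≤ (a :: b :: c :: d :: e :: f :: rest4).length := by simp only [List.length_cons]; omega
        exact_mod_cast this
      linarith
    · rintro (⟨x, y, hl, -⟩ | ⟨x, hl, -⟩ | ⟨x, hl, -⟩ | ⟨x, hl, -⟩ | ⟨x, hl, -⟩ |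
        ⟨x, hl, -⟩ | ⟨x, hl, -⟩ | ⟨x, hl, -⟩ | ⟨x, hl, -⟩ | ⟨x, hl, -⟩ | ⟨x, hl, -⟩ |
        hl | hl | ⟨x, hl, -⟩ | ⟨x, hl, -⟩ | ⟨x, hl, -⟩ | ⟨x, hl, -⟩ | ⟨x, hl, -⟩) <;>
      simp at hl
end
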